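/- arXiv:1707.09042 — 3 statements merged into one kernel-verified Lean document; each statement's English description precedes it below -/
import Mathlib

section
/- Fix N and α ∈ (0,1/2) with αN an integer. For integers 0 ≤ m ≤ m' ≤ N(N−1)/2, let μ_m denote the uniform probability measure on the set of simple graphs on N labeled vertices having exactly m edges. Then | E_{μ_m}[MCUT_α] − E_{μ_{m'}}[MCUT_α] | ≤ m' − m. -/
open Finset MeasureTheory

noncomputable section

/-- Number of edges of a simple graph on `Fin N`. -/
def numEdges {N : ℕ} (G : SimpleGraph (Fin N)) : ℕ := Nat.card G.edgeSet

/-- Number of edges of `G` with exactly one endpoint in `s` (counted as ordered pairs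
with the first coordinate in `s`, so each crossing edge is counted once). -/
def cutCount {N : ℕ} (G : SimpleGraph (Fin N)) (s : Finset (Fin N)) : ℕ :=
  Nat.card {p : Fin N × Fin N // p.1 ∈ s ∧ p.2 ∉ s ∧ G.Adj p.1 p.2}

/-- `MCUT_α(G)`: the maximum over vertex sets `V₁` of size `αN` of the number of
edges of `G` with exactly one endpoint in `V₁`. -/
def mcut {N : ℕ} (α : ℚ) (G : SimpleGraph (Fin N)) : ℕ :=
  (Finset.powersetCard ⌊α * (N : ℚ)⌋₊ (Finset.univ : Finset (Fin N))).sup fun s => cutCount G s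

/-- `α N` is a (nonnegative) integer. -/
def alphaIntegral (α : ℚ) (N : ℕ) : Prop := ∃ k : ℕ, α * (N : ℚ) = (k : ℚ)

/-- Expectation of `f` under the Erdős–Rényi measure `G(N,p)`: each potential edge is
present independently with probability `p`, so a graph with `e` edges has probability
`p^e (1-p)^(C(N,2) - e)`. -/
def erExp (N : ℕ) (p : ℝ) (f : SimpleGraph (Fin N) → ℝ) : ℝ :=
  ∑ G : SimpleGraph (Fin N),
    p ^ numEdges G * (1 - p) ^ (N.choose 2 - numEdges G) * f G

/-- Probability of an event under the Erdős–Rényi measure `G(N,p)`. -/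
def erProb (N : ℕ) (p : ℝ) (E : Set (SimpleGraph (Fin N))) : ℝ :=
  erExp N p (Set.indicator E fun _ => 1)

/-- `G` is `d`-regular. -/
def IsDReg {N : ℕ} (d : ℕ) (G : SimpleGraph (Fin N)) : Prop :=
  ∀ v, Nat.card (G.neighborSet v) = d

open Classical in
/-- The finite set of simple `d`-regular graphs on `N` labeled vertices. -/
def regFinset (N d : ℕ) : Finset (SimpleGraph (Fin N)) :=
  Finset.univ.filter fun G => IsDReg d G

/-- Expectation of `f` under the uniform measure `R(N,d)` on simple `d`-regular graphs. -/
def regExp (N d : ℕ) (f : SimpleGraph (Fin N) → ℝ) : ℝ :=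
  (∑ G ∈ regFinset N d, f G) / ((regFinset N d).card : ℝ)

/-- Probability of an event under the uniform measure `R(N,d)`. -/
def regProb (N d : ℕ) (E : Set (SimpleGraph (Fin N))) : ℝ :=
  regExp N d (Set.indicator E fun _ => 1)

end

open Classical in
/-- The finite set of simple graphs on `N` labeled vertices with exactly `m` edges. -/
noncomputable def edgeCountFinset (N m : ℕ) : Finset (SimpleGraph (Fin N)) :=
  Finset.univ.filter fun G => numEdges G = m

/-- Expectation of `f` under the uniform measure `μ_m` on simple graphs on `N` labeled
vertices having exactly `m` edges. -/
noncomputable def unifEdgeExp (N m : ℕ) (f : SimpleGraph (Fin N) → ℝ) : ℝ :=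
  (∑ G ∈ edgeCountFinset N m, f G) / ((edgeCountFinset N m).card : ℝ)

section Aux
open SimpleGraph
open scoped Classical

lemma numEdges_eq_card {N : ℕ} (G : SimpleGraph (Fin N)) :
    numEdges G = G.edgeFinset.card := by
  rw [numEdges, Nat.card_eq_fintype_card, ← Set.toFinset_card, edgeFinset]

lemma cutCount_eq_card {N : ℕ} (G : SimpleGraph (Fin N)) (s : Finset (Fin N)) :
    cutCount G s = (Finset.univ.filter fun p : Fin N × Fin N =>
      p.1 ∈ s ∧ p.2 ∉ s ∧ G.Adj p.1 p.2).card := by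
  rw [cutCount, Nat.card_eq_fintype_card, Fintype.card_subtype]

lemma cutCount_mono {N : ℕ} {H G : SimpleGraph (Fin N)} (h : H ≤ G) (s : Finset (Fin N)) :
    cutCount H s ≤ cutCount G s := by
  rw [cutCount_eq_card, cutCount_eq_card]
  apply Finset.card_le_card
  apply Finset.monotone_filter_right
  intro p hp
  exact fun hp => ⟨hp.1, hp.2.1, h hp.2.2⟩

lemma cutCount_delete {N : ℕ} {G : SimpleGraph (Fin N)} {e : Sym2 (Fin N)}
    (he : e ∈ G.edgeSet) (s : Finset (Fin N)) :
    cutCount G s ≤ cutCount (G.deleteEdges {e}) s + 1 := by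
  rw [cutCount_eq_card, cutCount_eq_card]
  set D := Finset.univ.filter fun p : Fin N × Fin N => p.1 ∈ s ∧ p.2 ∉ s ∧ G.Adj p.1 p.2 with hD
  set E := Finset.univ.filter fun p : Fin N × Fin N =>
    p.1 ∈ s ∧ p.2 ∉ s ∧ (G.deleteEdges {e}).Adj p.1 p.2 with hE
  have hsub : E ⊆ D := by
    intro p hp
    simp only [hD, hE, Finset.mem_filter, deleteEdges_adj] at *
    tauto
  have h1 : (D \ E).card ≤ 1 := by
    rw [Finset.card_le_one]
    intro p hp q hq
    simp only [Finset.mem_sdiff, hD, hE, Finset.mem_filter, Finset.mem_univ, true_and,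
      deleteEdges_adj, Set.mem_singleton_iff, not_and, not_not] at hp hq
    obtain ⟨⟨hp1, hp2, hp3⟩, hp4⟩ := hp
    obtain ⟨⟨hq1, hq2, hq3⟩, hq4⟩ := hq
    have hpe : s(p.1, p.2) = e := by tauto
    have hqe : s(q.1, q.2) = e := by tauto
    have := hpe.trans hqe.symm
    rw [Sym2.eq_iff] at this
    rcases this with ⟨h1, h2⟩ | ⟨h1, h2⟩
    · exact Prod.ext h1 h2
    · exfalso; rw [h1] at hp1; rw [← h2] at hq1; exact hp2 hq1
  calc D.card = E.card + (D \ E).card := by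
        rw [← Finset.card_sdiff_add_card_eq_card hsub]; ring
    _ ≤ E.card + 1 := by omega
  exact le_of_eq (by rw [hE]; congr 2; ext p; simp only [Finset.mem_filter])

lemma mcut_mono {N : ℕ} (α : ℚ) {H G : SimpleGraph (Fin N)} (h : H ≤ G) :
    mcut α H ≤ mcut α G :=
  Finset.sup_mono_fun fun s _ => cutCount_mono h s

lemma mcut_delete {N : ℕ} (α : ℚ) {G : SimpleGraph (Fin N)} {e : Sym2 (Fin N)}
    (he : e ∈ G.edgeSet) :
    mcut α G ≤ mcut α (G.deleteEdges {e}) + 1 := by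
  apply Finset.sup_le
  intro s hs
  calc cutCount G s ≤ cutCount (G.deleteEdges {e}) s + 1 := cutCount_delete he s
    _ ≤ mcut α (G.deleteEdges {e}) + 1 := by
        exact Nat.add_le_add_right (Finset.le_sup hs) 1

noncomputable def nondiagF (N : ℕ) : Finset (Sym2 (Fin N)) :=
  Finset.univ.filter fun e => ¬e.IsDiag

lemma nondiagF_card (N : ℕ) : (nondiagF N).card = N.choose 2 := by
  rw [nondiagF, ← Fintype.card_subtype, Sym2.card_subtype_not_diag, Fintype.card_fin]

lemma edgeFinset_subset_nondiag {N : ℕ} (G : SimpleGraph (Fin N)) :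
    G.edgeFinset ⊆ nondiagF N := by
  intro e he
  rw [mem_edgeFinset] at he
  simp only [nondiagF, Finset.mem_filter, Finset.mem_univ, true_and]
  exact G.not_isDiag_of_mem_edgeSet he

lemma mem_edgeFinset'' {N : ℕ} {G : SimpleGraph (Fin N)} {inst : Fintype G.edgeSet}
    {e : Sym2 (Fin N)} : e ∈ @SimpleGraph.edgeFinset _ G inst ↔ e ∈ G.edgeSet :=
  Set.mem_toFinset

lemma numEdges_eq_ncard {N : ℕ} (G : SimpleGraph (Fin N)) :
    numEdges G = G.edgeSet.ncard := Nat.card_coe_set_eq _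

lemma mem_edgeCountFinset {N m : ℕ} (G : SimpleGraph (Fin N)) :
    G ∈ edgeCountFinset N m ↔ G.edgeSet.ncard = m := by
  rw [edgeCountFinset, Finset.mem_filter, numEdges_eq_ncard]
  simp

lemma edgeFinset_card_eq_ncard {N : ℕ} (G : SimpleGraph (Fin N)) :
    G.edgeFinset.card = G.edgeSet.ncard := (Set.ncard_eq_toFinset_card' _).symm

lemma edgeCountFinset_nonempty {N m : ℕ} (hm : m ≤ N.choose 2) :
    (edgeCountFinset N m).Nonempty := by
  obtain ⟨t, hts, htc⟩ := Finset.exists_subset_card_eq (s := nondiagF N) (n := m)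
    (by rw [nondiagF_card]; exact hm)
  refine ⟨fromEdgeSet ↑t, ?_⟩
  rw [mem_edgeCountFinset]
  have : (fromEdgeSet (↑t : Set (Sym2 (Fin N)))).edgeSet = ↑t := by
    rw [edgeSet_fromEdgeSet]
    ext e
    simp only [Set.mem_diff, Finset.mem_coe, Set.mem_setOf_eq, and_iff_left_iff_imp]
    intro he
    have := hts he
    simp only [nondiagF, Finset.mem_filter] at this
    exact this.2
  rw [this, Set.ncard_coe_finset, htc]

/-- Double counting: summing `f` over pairs (graph with m+1 edges, one of its edges) after
deleting that edge equals summing `f` over pairs (graph with m edges, a non-edge). -/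
lemma pair_sum {N : ℕ} (m : ℕ) (f : SimpleGraph (Fin N) → ℝ) :
    ∑ G' ∈ edgeCountFinset N (m + 1), ∑ e ∈ G'.edgeFinset, f (G'.deleteEdges {e})
      = ∑ G ∈ edgeCountFinset N m, ∑ _e ∈ nondiagF N \ G.edgeFinset, f G := by
  rw [Finset.sum_sigma', Finset.sum_sigma']
  refine Finset.sum_nbij' (fun q => ⟨q.1.deleteEdges {q.2}, q.2⟩)
    (fun q => ⟨q.1 ⊔ fromEdgeSet {q.2}, q.2⟩) ?_ ?_ ?_ ?_ ?_
  · rintro ⟨G', e⟩ hq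
    rw [Finset.mem_sigma] at hq ⊢
    obtain ⟨hG', he⟩ := hq
    rw [mem_edgeCountFinset] at hG'
    rw [mem_edgeFinset] at he
    have hdel : (G'.deleteEdges {e}).edgeSet = G'.edgeSet \ {e} := edgeSet_deleteEdges _
    have hefs : (G'.deleteEdges {e}).edgeFinset = G'.edgeFinset.erase e := by
      ext x
      simp [mem_edgeFinset, hdel, Finset.mem_erase, and_comm]
    constructor
    · rw [mem_edgeCountFinset, hdel, Set.ncard_diff_singleton_of_mem he, hG']
      omega
    · rw [Finset.mem_sdiff]; dsimp only; rw [mem_edgeFinset'', hdel]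
      refine ⟨edgeFinset_subset_nondiag G' (by rwa [mem_edgeFinset]), ?_⟩
      simp
  · rintro ⟨G, e⟩ hq
    rw [Finset.mem_sigma] at hq ⊢
    obtain ⟨hG, he⟩ := hq
    rw [mem_edgeCountFinset] at hG
    rw [Finset.mem_sdiff] at he
    have hend : ¬ e.IsDiag := by
      have := he.1; simp only [nondiagF, Finset.mem_filter] at this; exact this.2
    have hens : e ∉ G.edgeSet := by rw [← mem_edgeFinset] at *; exact he.2
    have hes : (G ⊔ fromEdgeSet {e}).edgeSet = insert e G.edgeSet := by
      rw [edgeSet_sup, edgeSet_fromEdgeSet]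
      ext x
      simp only [Set.mem_union, Set.mem_diff, Set.mem_singleton_iff, Set.mem_setOf_eq,
        Set.mem_insert_iff]
      constructor
      · rintro (h | ⟨h, _⟩) <;> tauto
      · rintro (rfl | h)
        · exact Or.inr ⟨rfl, hend⟩
        · exact Or.inl h
    refine ⟨?_, ?_⟩
    · rw [mem_edgeCountFinset]
      show (G ⊔ fromEdgeSet {e}).edgeSet.ncard = m + 1
      rw [hes, Set.ncard_insert_of_notMem hens (Set.toFinite _), hG]
    · exact mem_edgeFinset''.mpr (by rw [hes]; exact Set.mem_insert _ _)
  · rintro ⟨G', e⟩ hq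
    rw [Finset.mem_sigma, mem_edgeFinset] at hq
    have : (G'.deleteEdges {e}) ⊔ fromEdgeSet {e} = G' := by
      apply SimpleGraph.edgeSet_inj.mp
      rw [edgeSet_sup, edgeSet_deleteEdges, edgeSet_fromEdgeSet]
      ext x
      simp only [Set.mem_union, Set.mem_diff, Set.mem_singleton_iff, Set.mem_setOf_eq]
      constructor
      · rintro (⟨h, _⟩ | ⟨rfl, _⟩)
        · exact h
        · exact hq.2
      · intro hx
        by_cases hxe : x = e
        · exact Or.inr ⟨hxe, hxe ▸ G'.not_isDiag_of_mem_edgeSet hq.2⟩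
        · exact Or.inl ⟨hx, hxe⟩
    simp [this]
  · rintro ⟨G, e⟩ hq
    rw [Finset.mem_sigma, Finset.mem_sdiff] at hq
    have hens : e ∉ G.edgeSet := by rw [← mem_edgeFinset]; exact hq.2.2
    have hend : ¬ e.IsDiag := by
      have := hq.2.1; simp only [nondiagF, Finset.mem_filter] at this; exact this.2
    have : (G ⊔ fromEdgeSet {e}).deleteEdges {e} = G := by
      apply SimpleGraph.edgeSet_inj.mp
      rw [edgeSet_deleteEdges, edgeSet_sup, edgeSet_fromEdgeSet]
      ext x
      simp only [Set.mem_diff, Set.mem_union, Set.mem_singleton_iff, Set.mem_setOf_eq]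
      constructor
      · rintro ⟨h | ⟨rfl, _⟩, hxe⟩
        · exact h
        · exact absurd rfl hxe
      · intro hx
        exact ⟨Or.inl hx, fun hxe => hens (hxe ▸ hx)⟩
    simp [this]
  · rintro ⟨G', e⟩ _; rfl

lemma step_le {N : ℕ} (α : ℚ) {m : ℕ} (hm : m < N.choose 2) :
    unifEdgeExp N m (fun G => (mcut α G : ℝ)) ≤ unifEdgeExp N (m+1) (fun G => (mcut α G : ℝ)) ∧
    unifEdgeExp N (m+1) (fun G => (mcut α G : ℝ))
      ≤ unifEdgeExp N m (fun G => (mcut α G : ℝ)) + 1 := by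
  classical
  set F : SimpleGraph (Fin N) → ℝ := fun G => (mcut α G : ℝ) with hF
  set A := edgeCountFinset N m with hA
  set B := edgeCountFinset N (m + 1) with hB
  have hane : A.Nonempty := edgeCountFinset_nonempty hm.le
  have hbne : B.Nonempty := edgeCountFinset_nonempty hm
  have ha : (0:ℝ) < A.card := by exact_mod_cast Finset.card_pos.mpr hane
  have hb : (0:ℝ) < B.card := by exact_mod_cast Finset.card_pos.mpr hbne
  set k := N.choose 2 - m with hk
  have hm1 : (0:ℝ) < (m:ℝ) + 1 := by positivity
  have hcardB : ∀ G' ∈ B, G'.edgeFinset.card = m + 1 := fun G' hG' => by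
    rw [edgeFinset_card_eq_ncard]; exact (mem_edgeCountFinset G').mp hG'
  have hcardA : ∀ G ∈ A, (nondiagF N \ G.edgeFinset).card = k := fun G hG => by
    rw [Finset.card_sdiff_of_subset (edgeFinset_subset_nondiag G), nondiagF_card,
      edgeFinset_card_eq_ncard, (mem_edgeCountFinset G).mp hG]
  have key : ∀ f : SimpleGraph (Fin N) → ℝ,
      ∑ G' ∈ B, ∑ e ∈ G'.edgeFinset, f (G'.deleteEdges {e}) = (k:ℝ) * ∑ G ∈ A, f G := by
    intro f
    rw [pair_sum m f, Finset.mul_sum]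
    refine Finset.sum_congr rfl fun G hG => ?_
    rw [Finset.sum_const, hcardA G hG, nsmul_eq_mul]
  have innerconst : ∀ c : ℝ, ∀ G' ∈ B, ∑ _e ∈ G'.edgeFinset, c = ((m:ℝ)+1) * c := by
    intro c G' hG'
    rw [Finset.sum_const, hcardB G' hG', nsmul_eq_mul]
    push_cast; ring
  have cardeq : (k:ℝ) * A.card = ((m:ℝ)+1) * B.card := by
    have h0 := key fun _ => (1:ℝ)
    rw [Finset.sum_const, nsmul_eq_mul, mul_one] at h0
    calc (k:ℝ) * A.card = ∑ G' ∈ B, ∑ _e ∈ G'.edgeFinset, (1:ℝ) := h0.symm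
      _ = ∑ _G' ∈ B, ((m:ℝ)+1) * 1 := Finset.sum_congr rfl fun G' hG' => innerconst 1 G' hG'
      _ = ((m:ℝ)+1) * B.card := by rw [Finset.sum_const, nsmul_eq_mul]; ring
  have I1 : (k:ℝ) * ∑ G ∈ A, F G ≤ ((m:ℝ)+1) * ∑ G' ∈ B, F G' := by
    rw [← key F]
    calc ∑ G' ∈ B, ∑ e ∈ G'.edgeFinset, F (G'.deleteEdges {e})
        ≤ ∑ G' ∈ B, ∑ _e ∈ G'.edgeFinset, F G' := by
          refine Finset.sum_le_sum fun G' _ => Finset.sum_le_sum fun e _ => ?_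
          show ((mcut α (G'.deleteEdges {e}) : ℕ):ℝ) ≤ ((mcut α G' : ℕ):ℝ)
          exact_mod_cast mcut_mono α (deleteEdges_le _)
      _ = ∑ G' ∈ B, ((m:ℝ)+1) * F G' :=
          Finset.sum_congr rfl fun G' hG' => innerconst (F G') G' hG'
      _ = ((m:ℝ)+1) * ∑ G' ∈ B, F G' := by rw [Finset.mul_sum]
  have I2 : ((m:ℝ)+1) * ∑ G' ∈ B, F G'
      ≤ (k:ℝ) * ∑ G ∈ A, F G + ((m:ℝ)+1) * B.card := by
    rw [← key F]
    calc ((m:ℝ)+1) * ∑ G' ∈ B, F G' = ∑ G' ∈ B, ((m:ℝ)+1) * F G' := by rw [Finset.mul_sum]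
      _ = ∑ G' ∈ B, ∑ _e ∈ G'.edgeFinset, F G' :=
          (Finset.sum_congr rfl fun G' hG' => (innerconst (F G') G' hG').symm)
      _ ≤ ∑ G' ∈ B, ∑ e ∈ G'.edgeFinset, (F (G'.deleteEdges {e}) + 1) := by
          refine Finset.sum_le_sum fun G' _ => Finset.sum_le_sum fun e he => ?_
          have hee : e ∈ G'.edgeSet := mem_edgeFinset''.mp he
          have := mcut_delete α hee
          show ((mcut α G' : ℕ):ℝ) ≤ ((mcut α (G'.deleteEdges {e}) : ℕ):ℝ) + 1
          exact_mod_cast this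
      _ = ∑ G' ∈ B, (∑ e ∈ G'.edgeFinset, F (G'.deleteEdges {e})
            + ∑ _e ∈ G'.edgeFinset, (1:ℝ)) := by
          refine Finset.sum_congr rfl fun G' _ => ?_
          rw [Finset.sum_add_distrib]
      _ = (∑ G' ∈ B, ∑ e ∈ G'.edgeFinset, F (G'.deleteEdges {e})) + ((m:ℝ)+1) * B.card := by
          rw [Finset.sum_add_distrib]
          congr 1
          calc ∑ G' ∈ B, ∑ _e ∈ G'.edgeFinset, (1:ℝ)
              = ∑ _G' ∈ B, ((m:ℝ)+1) * 1 :=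
                Finset.sum_congr rfl fun G' hG' => innerconst 1 G' hG'
            _ = ((m:ℝ)+1) * B.card := by rw [Finset.sum_const, nsmul_eq_mul]; ring
  have goal1 : unifEdgeExp N m F ≤ unifEdgeExp N (m+1) F := by
    show (∑ G ∈ A, F G) / (A.card : ℝ) ≤ (∑ G' ∈ B, F G') / (B.card : ℝ)
    rw [div_le_div_iff₀ ha hb]
    have h5 := mul_le_mul_of_nonneg_right I1 ha.le
    have h6 : ((m:ℝ)+1) * ((∑ G ∈ A, F G) * B.card) ≤ ((m:ℝ)+1) * ((∑ G' ∈ B, F G') * A.card) := by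
      calc ((m:ℝ)+1) * ((∑ G ∈ A, F G) * B.card)
          = (k:ℝ) * (∑ G ∈ A, F G) * A.card := by
            linear_combination (-(∑ G ∈ A, F G)) * cardeq
        _ ≤ ((m:ℝ)+1) * (∑ G' ∈ B, F G') * A.card := h5
        _ = ((m:ℝ)+1) * ((∑ G' ∈ B, F G') * A.card) := by ring
    exact le_of_mul_le_mul_left h6 hm1
  have goal2 : unifEdgeExp N (m+1) F ≤ unifEdgeExp N m F + 1 := by
    show (∑ G' ∈ B, F G') / (B.card : ℝ) ≤ (∑ G ∈ A, F G) / (A.card : ℝ) + 1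
    have e2 : (∑ G ∈ A, F G) / (A.card : ℝ) + 1 = ((∑ G ∈ A, F G) + A.card) / A.card := by
      field_simp
    rw [e2, div_le_div_iff₀ hb ha]
    have h7 := mul_le_mul_of_nonneg_right I2 ha.le
    have h8 : ((m:ℝ)+1) * ((∑ G' ∈ B, F G') * A.card)
        ≤ ((m:ℝ)+1) * (((∑ G ∈ A, F G) + A.card) * B.card) := by
      calc ((m:ℝ)+1) * ((∑ G' ∈ B, F G') * A.card)
          = ((m:ℝ)+1) * (∑ G' ∈ B, F G') * A.card := by ring
        _ ≤ ((k:ℝ) * (∑ G ∈ A, F G) + ((m:ℝ)+1) * B.card) * A.card := h7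
        _ = ((m:ℝ)+1) * (((∑ G ∈ A, F G) + A.card) * B.card) := by
            linear_combination (∑ G ∈ A, F G) * cardeq
    exact le_of_mul_le_mul_left h8 hm1
  exact ⟨goal1, goal2⟩

lemma multi_step {N : ℕ} (α : ℚ) (m : ℕ) :
    ∀ j : ℕ, m + j ≤ N.choose 2 →
      unifEdgeExp N m (fun G => (mcut α G : ℝ))
        ≤ unifEdgeExp N (m + j) (fun G => (mcut α G : ℝ)) ∧
      unifEdgeExp N (m + j) (fun G => (mcut α G : ℝ))
        ≤ unifEdgeExp N m (fun G => (mcut α G : ℝ)) + j := by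
  intro j
  induction j with
  | zero => intro _; simp
  | succ n ih =>
    intro h
    have h1 : m + n < N.choose 2 := by omega
    obtain ⟨ih1, ih2⟩ := ih (by omega)
    obtain ⟨s1, s2⟩ := step_le α h1
    have hidx : m + (n + 1) = (m + n) + 1 := rfl
    rw [hidx]
    constructor
    · exact ih1.trans s1
    · push_cast
      push_cast at ih2
      linarith


end Aux

/-- Fix `N` and `α ∈ (0,1/2)` with `αN` an integer. For integers
`0 ≤ m ≤ m' ≤ N(N−1)/2`, `|E_{μ_m}[MCUT_α] − E_{μ_{m'}}[MCUT_α]| ≤ m' − m`. -/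
theorem statement3 (N : ℕ) (α : ℚ) (hα0 : 0 < α) (hα : α < 1 / 2)
    (hint : alphaIntegral α N) (m m' : ℕ) (hmm' : m ≤ m') (hm' : m' ≤ N * (N - 1) / 2) :
    |unifEdgeExp N m (fun G => (mcut α G : ℝ)) -
      unifEdgeExp N m' (fun G => (mcut α G : ℝ))| ≤ (m' : ℝ) - m := by
  have hC : m' ≤ N.choose 2 := by rw [Nat.choose_two_right]; exact hm'
  obtain ⟨h1, h2⟩ := multi_step (N := N) α m (m' - m) (by omega)
  rw [show m + (m' - m) = m' from by omega] at h1 h2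
  have hc : ((m' - m : ℕ) : ℝ) = (m' : ℝ) - m := by
    rw [Nat.cast_sub hmm']
  rw [hc] at h2
  rw [abs_le]
  constructor <;> linarith
end

section
/- Let T > 0. Suppose (ν_β) is a family of finite Borel measures on [0,T] of the form dν_β(t) = m_β(t) dt + c_β δ_T and ν is a finite Borel measure of the form dν(t) = m(t) dt + c δ_T, where m_β, m : [0,T) → [0,∞) are nondecreasing and right-continuous with m_β dt, m dt finite measures, and c_β, c ≥ 0. Assume ν_β → ν in the weak-* topology as β → ∞, i.e. ∫ f dν_β → ∫ f dν for every continuous f : [0,T] → ℝ. Then for every bounded Borel measurable ψ : [0,T] → ℝ satisfying lim_{s↑T} ψ(s) = ψ(T), one has ∫_{[0,T]} ψ dν_β → ∫_{[0,T]} ψ dν as β → ∞. -/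
open MeasureTheory Filter Set




private lemma st15_density_bound {T η M : ℝ} (hη : 0 < η) {w : ℝ → ℝ}
    (hmono : MonotoneOn w (Set.Ico 0 T)) {a : ℝ} {μ : Measure ℝ}
    (hμ : μ = (volume.restrict (Set.Ico 0 T)).withDensity (fun t => ENNReal.ofReal (w t)) +
      ENNReal.ofReal a • Measure.dirac T)
    (hM : 0 ≤ M) (hmass : μ (Set.Icc 0 T) ≤ ENNReal.ofReal M)
    {t : ℝ} (ht : t ∈ Set.Icc 0 (T - η)) : w t ≤ M / η := by
  rcases le_or_gt (w t) 0 with h0 | h0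
  · exact h0.trans (div_nonneg hM hη.le)
  have ht0 : 0 ≤ t := ht.1
  have htT : t < T := by have := ht.2; linarith
  have hsub : Set.Ico t T ⊆ Set.Ico 0 T := Set.Ico_subset_Ico ht0 le_rfl
  have key : ENNReal.ofReal (w t) * ENNReal.ofReal (T - t) ≤ ENNReal.ofReal M := by
    have h1 : ((volume.restrict (Set.Ico 0 T)).withDensity
        (fun s => ENNReal.ofReal (w s))) (Set.Ico t T)
        = ∫⁻ s in Set.Ico t T, ENNReal.ofReal (w s) ∂volume := by
      rw [withDensity_apply _ measurableSet_Ico, Measure.restrict_restrict measurableSet_Ico,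
        Set.inter_eq_left.2 hsub]
    have h2 : ENNReal.ofReal (w t) * ENNReal.ofReal (T - t)
        ≤ ∫⁻ s in Set.Ico t T, ENNReal.ofReal (w s) ∂volume := by
      have : ∫⁻ _ in Set.Ico t T, ENNReal.ofReal (w t) ∂volume
          = ENNReal.ofReal (w t) * ENNReal.ofReal (T - t) := by
        rw [setLIntegral_const, Real.volume_Ico]
      rw [← this]
      refine lintegral_mono_ae ?_
      filter_upwards [ae_restrict_mem measurableSet_Ico] with s hs
      exact ENNReal.ofReal_le_ofReal (hmono ⟨ht0, htT⟩ (hsub hs) hs.1)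
    have h3 : ((volume.restrict (Set.Ico 0 T)).withDensity
        (fun s => ENNReal.ofReal (w s))) (Set.Ico t T) ≤ μ (Set.Ico t T) := by
      rw [hμ]; exact Measure.le_add_right le_rfl _
    have h4 : μ (Set.Ico t T) ≤ μ (Set.Icc 0 T) :=
      measure_mono (fun x hx => ⟨ht0.trans hx.1, hx.2.le⟩)
    calc ENNReal.ofReal (w t) * ENNReal.ofReal (T - t)
        ≤ _ := h2
      _ = _ := h1.symm
      _ ≤ μ (Set.Ico t T) := h3
      _ ≤ μ (Set.Icc 0 T) := h4
      _ ≤ ENNReal.ofReal M := hmass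
  have hηt : ENNReal.ofReal (w t) * ENNReal.ofReal η ≤ ENNReal.ofReal M := by
    refine le_trans (mul_le_mul_right (ENNReal.ofReal_le_ofReal (by linarith [ht.2])) _) key
  rw [← ENNReal.ofReal_mul h0.le] at hηt
  have := (ENNReal.ofReal_le_ofReal_iff hM).1 hηt
  rw [le_div_iff₀ hη]
  linarith

private lemma st15_dom {T η M : ℝ} (hη : 0 < η) (hηT : η ≤ T) {w : ℝ → ℝ}
    (hmono : MonotoneOn w (Set.Ico 0 T)) {a : ℝ} {μ : Measure ℝ}
    (hμ : μ = (volume.restrict (Set.Ico 0 T)).withDensity (fun t => ENNReal.ofReal (w t)) +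
      ENNReal.ofReal a • Measure.dirac T)
    (hM : 0 ≤ M) (hmass : μ (Set.Icc 0 T) ≤ ENNReal.ofReal M) :
    μ.restrict (Set.Icc 0 (T - η)) ≤
      ENNReal.ofReal (M / η) • volume.restrict (Set.Icc 0 (T - η)) := by
  refine Measure.le_iff.2 fun s hs => ?_
  rw [Measure.restrict_apply hs, Measure.smul_apply, Measure.restrict_apply hs, smul_eq_mul, hμ,
    Measure.add_apply, Measure.smul_apply, Measure.dirac_apply' _ (hs.inter measurableSet_Icc)]
  have hTnot : T ∉ s ∩ Set.Icc 0 (T - η) := fun hmem => by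
    have := hmem.2.2; linarith
  rw [Set.indicator_of_notMem hTnot, smul_eq_mul, mul_zero, add_zero,
    withDensity_apply _ (hs.inter measurableSet_Icc),
    Measure.restrict_restrict (hs.inter measurableSet_Icc)]
  calc ∫⁻ x in (s ∩ Set.Icc 0 (T - η)) ∩ Set.Ico 0 T, ENNReal.ofReal (w x) ∂volume
      ≤ ∫⁻ _ in (s ∩ Set.Icc 0 (T - η)) ∩ Set.Ico 0 T, ENNReal.ofReal (M / η) ∂volume := by
        refine lintegral_mono_ae ?_
        filter_upwards [ae_restrict_mem ((hs.inter measurableSet_Icc).inter measurableSet_Ico)]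
          with x hx
        exact ENNReal.ofReal_le_ofReal
          (st15_density_bound hη hmono hμ hM hmass hx.1.2)
    _ = ENNReal.ofReal (M / η) * volume ((s ∩ Set.Icc 0 (T - η)) ∩ Set.Ico 0 T) := by
        rw [setLIntegral_const]
    _ ≤ ENNReal.ofReal (M / η) * volume (s ∩ Set.Icc 0 (T - η)) := by
        exact mul_le_mul_right (measure_mono Set.inter_subset_left) _


private lemma st15_key_est {T η M ε₁ εL C : ℝ} (hT : 0 < T) (hη : 0 < η) (hηT : η ≤ T)
    {w : ℝ → ℝ} (hmono : MonotoneOn w (Set.Ico 0 T)) {a : ℝ} {μ : Measure ℝ}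
    (hμ : μ = (volume.restrict (Set.Ico 0 T)).withDensity (fun t => ENNReal.ofReal (w t)) +
      ENNReal.ofReal a • Measure.dirac T)
    (hM : 0 ≤ M) (hmass : μ (Set.Icc 0 T) ≤ ENNReal.ofReal M)
    {ψ h : ℝ → ℝ} (hψmeas : Measurable ψ) (hh : Continuous h)
    (hC : ∀ t ∈ Set.Icc 0 T, |ψ t| ≤ C)
    (hε₁ : 0 ≤ ε₁) (hψ₁ : ∀ s ∈ Set.Ico (T - η) T, |ψ s - ψ T| ≤ ε₁)
    (hhT : ∀ s ∈ Set.Icc (T - η) T, h s = ψ T)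
    (hεL : 0 ≤ εL) (hL : (∫ t in Set.Icc 0 (T - η), |ψ t - h t|) ≤ εL) :
    |(∫ t in Set.Icc 0 T, ψ t ∂μ) - ∫ t in Set.Icc 0 T, h t ∂μ| ≤ M / η * εL + ε₁ * M := by
  have hμfin : μ (Set.Icc 0 T) ≠ ⊤ :=
    (lt_of_le_of_lt hmass ENNReal.ofReal_lt_top).ne
  obtain ⟨C', hC'⟩ := isCompact_Icc.exists_bound_of_continuousOn
    (f := h) (s := Set.Icc (0:ℝ) T) hh.continuousOn
  -- integrability of ψ and h on Icc 0 T wrt μ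
  have Iψ : IntegrableOn ψ (Set.Icc 0 T) μ := by
    refine Measure.integrableOn_of_bounded hμfin hψmeas.aestronglyMeasurable (M := C) ?_
    filter_upwards [ae_restrict_mem measurableSet_Icc] with x hx
    simpa [Real.norm_eq_abs] using hC x hx
  have Ih : IntegrableOn h (Set.Icc 0 T) μ := by
    refine Measure.integrableOn_of_bounded hμfin hh.measurable.aestronglyMeasurable (M := C') ?_
    filter_upwards [ae_restrict_mem measurableSet_Icc] with x hx
    exact hC' x hx
  have IF : IntegrableOn (fun t => |ψ t - h t|) (Set.Icc 0 T) μ := (Iψ.sub Ih).abs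
  have step1 : |(∫ t in Set.Icc 0 T, ψ t ∂μ) - ∫ t in Set.Icc 0 T, h t ∂μ|
      ≤ ∫ t in Set.Icc 0 T, |ψ t - h t| ∂μ := by
    rw [← integral_sub Iψ Ih]
    simpa [Real.norm_eq_abs] using
      norm_integral_le_integral_norm (μ := μ.restrict (Set.Icc 0 T)) (f := fun t => ψ t - h t)
  have hTη0 : 0 ≤ T - η := by linarith
  -- split the integral
  have I1 : Integrable ((Set.Icc 0 (T - η)).indicator fun t => |ψ t - h t|)
      (μ.restrict (Set.Icc 0 T)) := IF.indicator measurableSet_Icc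
  have I2 : Integrable ((Set.Ioc (T - η) T).indicator fun _ => ε₁)
      (μ.restrict (Set.Icc 0 T)) := by
    refine Integrable.indicator ?_ measurableSet_Ioc
    exact integrableOn_const hμfin
  have hsub2 : Set.Ioc (T - η) T ⊆ Set.Icc 0 T := fun x hx => ⟨by linarith [hx.1], hx.2⟩
  have hsub3 : Set.Icc (0:ℝ) (T - η) ⊆ Set.Icc 0 T := Set.Icc_subset_Icc le_rfl (by linarith)
  have ptw : ∀ᵐ t ∂μ.restrict (Set.Icc 0 T), |ψ t - h t| ≤
      (Set.Icc 0 (T - η)).indicator (fun t => |ψ t - h t|) t +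
      (Set.Ioc (T - η) T).indicator (fun _ => ε₁) t := by
    filter_upwards [ae_restrict_mem measurableSet_Icc] with t ht
    rcases le_or_gt t (T - η) with h1 | h1
    · have hm1 : t ∈ Set.Icc 0 (T - η) := ⟨ht.1, h1⟩
      rw [Set.indicator_of_mem hm1]
      have : (0:ℝ) ≤ (Set.Ioc (T - η) T).indicator (fun _ => ε₁) t :=
        Set.indicator_nonneg (fun _ _ => hε₁) t
      linarith
    · rw [Set.indicator_of_notMem (fun hmem => absurd hmem.2 (not_le.2 h1)),
        Set.indicator_of_mem (show t ∈ Set.Ioc (T - η) T from ⟨h1, ht.2⟩)]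
      have hht : h t = ψ T := hhT t ⟨h1.le, ht.2⟩
      rcases eq_or_lt_of_le ht.2 with rfl | h2
      · simp [hht, hε₁]
      · have := hψ₁ t ⟨h1.le, h2⟩
        rw [hht]; linarith [this]
  have step2 : (∫ t in Set.Icc 0 T, |ψ t - h t| ∂μ)
      ≤ (∫ t in Set.Icc 0 (T - η), |ψ t - h t| ∂μ) +
        (μ (Set.Ioc (T - η) T)).toReal * ε₁ := by
    have := integral_mono_ae IF (I1.add I2) ptw
    simp only [Pi.add_apply] at this
    rw [integral_add I1 I2, integral_indicator measurableSet_Icc,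
      integral_indicator measurableSet_Ioc, Measure.restrict_restrict measurableSet_Icc,
      Measure.restrict_restrict measurableSet_Ioc,
      Set.inter_eq_left.2 hsub3, Set.inter_eq_left.2 hsub2,
      setIntegral_const, smul_eq_mul] at this
    exact this
  -- bound the near-T part
  have hnear : (μ (Set.Ioc (T - η) T)).toReal * ε₁ ≤ ε₁ * M := by
    have h1 : μ (Set.Ioc (T - η) T) ≤ ENNReal.ofReal M :=
      le_trans (measure_mono hsub2) hmass
    have := ENNReal.toReal_le_of_le_ofReal hM h1
    nlinarith
  -- bound the main part via domination
  have hdom := st15_dom hη hηT hmono hμ hM hmass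
  have IFvol : IntegrableOn (fun t => |ψ t - h t|) (Set.Icc 0 (T - η)) volume := by
    refine Measure.integrableOn_of_bounded (by simp) 
      ((hψmeas.sub hh.measurable).abs.aestronglyMeasurable) (M := C + C') ?_
    filter_upwards [ae_restrict_mem measurableSet_Icc] with x hx
    have hx' : x ∈ Set.Icc 0 T := ⟨hx.1, by linarith [hx.2]⟩
    have := hC x hx'
    have := hC' x hx'
    rw [Real.norm_eq_abs, abs_abs]
    calc |ψ x - h x| ≤ |ψ x| + |h x| := abs_sub _ _
      _ ≤ C + C' := by rw [Real.norm_eq_abs] at *; linarith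
  have Ismul : Integrable (fun t => |ψ t - h t|)
      (ENNReal.ofReal (M / η) • volume.restrict (Set.Icc 0 (T - η))) :=
    IFvol.smul_measure ENNReal.ofReal_ne_top
  have step3 : (∫ t in Set.Icc 0 (T - η), |ψ t - h t| ∂μ) ≤ M / η * εL := by
    calc (∫ t in Set.Icc 0 (T - η), |ψ t - h t| ∂μ)
        ≤ ∫ t, |ψ t - h t| ∂(ENNReal.ofReal (M / η) • volume.restrict (Set.Icc 0 (T - η))) :=
          integral_mono_measure hdom (ae_of_all _ fun t => abs_nonneg _) Ismul
      _ = (M / η) * ∫ t in Set.Icc 0 (T - η), |ψ t - h t| := by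
          rw [integral_smul_measure, ENNReal.toReal_ofReal (div_nonneg hM hη.le), smul_eq_mul]
      _ ≤ M / η * εL := by
          refine mul_le_mul_of_nonneg_left hL (div_nonneg hM hη.le)
  linarith [step1, step2, step3, hnear]

private lemma st15_approx {u C : ℝ} (hu : 0 ≤ u) {ψ : ℝ → ℝ} (hψmeas : Measurable ψ)
    (hC : ∀ t ∈ Set.Icc 0 u, |ψ t| ≤ C) (vT : ℝ) {ε : ℝ} (hε : 0 < ε) :
    ∃ h : ℝ → ℝ, Continuous h ∧ (∀ s, u ≤ s → h s = vT) ∧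
      (∫ t in Set.Icc 0 u, |ψ t - h t|) ≤ ε := by
  have hC0 : 0 ≤ C := (abs_nonneg _).trans (hC 0 ⟨le_rfl, hu⟩)
  set f : ℝ → ℝ := (Set.Icc 0 u).indicator ψ with hf_def
  have hf : Integrable f volume := by
    rw [hf_def, integrable_indicator_iff measurableSet_Icc]
    refine Measure.integrableOn_of_bounded (by simp) hψmeas.aestronglyMeasurable (M := C) ?_
    filter_upwards [ae_restrict_mem measurableSet_Icc] with x hx
    simpa [Real.norm_eq_abs] using hC x hx
  obtain ⟨g, gsupp, hg, gcont, gint⟩ :=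
    hf.exists_hasCompactSupport_integral_sub_le (half_pos hε)
  obtain ⟨B, hB⟩ := gsupp.exists_bound_of_continuous gcont
  have hB0 : 0 ≤ B := (norm_nonneg _).trans (hB 0)
  set D : ℝ := C + B + |vT| + 1 with hD_def
  have hD : 0 < D := by positivity
  set θ : ℝ := min 1 (ε / (2 * D)) with hθ_def
  have hθ : 0 < θ := lt_min one_pos (by positivity)
  set χ : ℝ → ℝ := fun t => max 0 (min 1 ((u - t) / θ)) with hχ_def
  have hχcont : Continuous χ :=
    continuous_const.max (continuous_const.min ((continuous_const.sub continuous_id).div_const θ))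
  have hχ01 : ∀ t, 0 ≤ χ t ∧ χ t ≤ 1 := fun t =>
    ⟨le_max_left _ _, max_le zero_le_one (min_le_left _ _)⟩
  have hχ0 : ∀ s, u ≤ s → χ s = 0 := by
    intro s hs
    have : (u - s) / θ ≤ 0 := div_nonpos_of_nonpos_of_nonneg (by linarith) hθ.le
    have : min 1 ((u - s) / θ) ≤ 0 := le_trans (min_le_right _ _) this
    simp [hχ_def, max_eq_left this]
  have hχ1 : ∀ t, t ≤ u - θ → χ t = 1 := by
    intro t htθ
    have h1 : (1:ℝ) ≤ (u - t) / θ := (le_div_iff₀ hθ).2 (by linarith)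
    simp [hχ_def, min_eq_left h1, max_eq_right (zero_le_one)]
  refine ⟨fun t => χ t * g t + (1 - χ t) * vT, by fun_prop, ?_, ?_⟩
  · intro s hs; simp [hχ0 s hs]
  set h : ℝ → ℝ := fun t => χ t * g t + (1 - χ t) * vT with hh_def
  have hhb : ∀ t, |h t| ≤ B + |vT| := by
    intro t
    obtain ⟨h0, h1⟩ := hχ01 t
    have hgB : |g t| ≤ B := by simpa [Real.norm_eq_abs] using hB t
    have e1 : |χ t * g t| ≤ χ t * B := by
      rw [abs_mul, abs_of_nonneg h0]
      exact mul_le_mul_of_nonneg_left hgB h0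
    have e2 : |(1 - χ t) * vT| ≤ (1 - χ t) * |vT| := by
      rw [abs_mul, abs_of_nonneg (show (0:ℝ) ≤ 1 - χ t by linarith)]
    have e3 : |h t| ≤ |χ t * g t| + |(1 - χ t) * vT| := abs_add_le _ _
    nlinarith [abs_nonneg vT]
  have hptw : ∀ t ∈ Set.Icc 0 u, |ψ t - h t| ≤
      ‖f t - g t‖ + (Set.Ioc (u - θ) u).indicator (fun _ => D) t := by
    intro t ht
    rcases le_or_gt t (u - θ) with h1 | h1
    · have : h t = g t := by simp [hh_def, hχ1 t h1]
      rw [this, hf_def, Set.indicator_of_mem ht]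
      have : (0:ℝ) ≤ (Set.Ioc (u - θ) u).indicator (fun _ => D) t :=
        Set.indicator_nonneg (fun _ _ => hD.le) t
      rw [Real.norm_eq_abs]; linarith
    · rw [Set.indicator_of_mem (show t ∈ Set.Ioc (u - θ) u from ⟨h1, ht.2⟩)]
      have := hC t ht
      have := hhb t
      have : |ψ t - h t| ≤ C + (B + |vT|) := by
        calc |ψ t - h t| ≤ |ψ t| + |h t| := abs_sub _ _
          _ ≤ C + (B + |vT|) := by linarith
      have := norm_nonneg (f t - g t)
      rw [hD_def]; linarith
  -- integrability pieces
  have I0 : IntegrableOn (fun t => |ψ t - h t|) (Set.Icc 0 u) volume := by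
    refine Measure.integrableOn_of_bounded (by simp)
      ((hψmeas.sub (hχcont.mul gcont |>.add
        ((continuous_const.sub hχcont).mul continuous_const)).measurable).abs.aestronglyMeasurable)
      (M := C + (B + |vT|)) ?_
    filter_upwards [ae_restrict_mem measurableSet_Icc] with x hx
    rw [Real.norm_eq_abs, abs_abs]
    calc |ψ x - h x| ≤ |ψ x| + |h x| := abs_sub _ _
      _ ≤ C + (B + |vT|) := add_le_add (hC x hx) (hhb x)
  have I1 : Integrable (fun t => ‖f t - g t‖) (volume.restrict (Set.Icc 0 u)) :=
    (hf.sub gint).norm.integrableOn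
  have I2 : Integrable ((Set.Ioc (u - θ) u).indicator fun _ => D)
      (volume.restrict (Set.Icc 0 u)) := by
    refine Integrable.indicator ?_ measurableSet_Ioc
    exact integrableOn_const (by simp)
  have step : (∫ t in Set.Icc 0 u, |ψ t - h t|)
      ≤ (∫ t in Set.Icc 0 u, ‖f t - g t‖) +
        ∫ t in Set.Icc 0 u, (Set.Ioc (u - θ) u).indicator (fun _ => D) t := by
    rw [← integral_add I1 I2]
    refine integral_mono_ae I0 (I1.add I2) ?_
    filter_upwards [ae_restrict_mem measurableSet_Icc] with t ht
    exact hptw t ht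
  have b1 : (∫ t in Set.Icc 0 u, ‖f t - g t‖) ≤ ε / 2 :=
    le_trans (setIntegral_le_integral (hf.sub gint).norm
      (ae_of_all _ fun x => norm_nonneg _)) hg
  have b2 : (∫ t in Set.Icc 0 u, (Set.Ioc (u - θ) u).indicator (fun _ => D) t) ≤ ε / 2 := by
    rw [setIntegral_indicator measurableSet_Ioc, setIntegral_const, smul_eq_mul]
    have hv : volume (Set.Icc 0 u ∩ Set.Ioc (u - θ) u) ≤ ENNReal.ofReal θ := by
      refine le_trans (measure_mono Set.inter_subset_right) ?_
      rw [Real.volume_Ioc]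
      exact ENNReal.ofReal_le_ofReal (by linarith)
    have hv' := ENNReal.toReal_le_of_le_ofReal hθ.le hv
    have hθε : θ * D ≤ ε / 2 := by
      have : θ ≤ ε / (2 * D) := min_le_right _ _
      calc θ * D ≤ (ε / (2 * D)) * D := mul_le_mul_of_nonneg_right this hD.le
        _ = ε / 2 := by field_simp
    change volume.real (Set.Icc 0 u ∩ Set.Ioc (u - θ) u) ≤ θ at hv'
    have := mul_le_mul_of_nonneg_right hv' hD.le
    linarith
  linarith

/-- Let `T > 0` and let `ν_β = m_β dt + c_β δ_T`, `ν = m dt + c δ_T` be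
finite Borel measures on `[0,T]`, with `m_β, m : [0,T) → [0,∞)` nondecreasing and
right-continuous with finite integral and `c_β, c ≥ 0`.  If `ν_β → ν` weak-* as `β → ∞`
(i.e. `∫ f dν_β → ∫ f dν` for every continuous `f : [0,T] → ℝ`), then for every bounded
Borel `ψ : [0,T] → ℝ` with `lim_{s↑T} ψ(s) = ψ(T)` one has `∫ ψ dν_β → ∫ ψ dν`. -/
theorem statement15 (T : ℝ) (hT : 0 < T)
    (mβ : ℝ → ℝ → ℝ) (m : ℝ → ℝ) (cβ : ℝ → ℝ) (c : ℝ)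
    (hmβ0 : ∀ β, ∀ t ∈ Set.Ico 0 T, 0 ≤ mβ β t)
    (hmβmono : ∀ β, MonotoneOn (mβ β) (Set.Ico 0 T))
    (hmβrc : ∀ β, ∀ t ∈ Set.Ico 0 T, ContinuousWithinAt (mβ β) (Set.Ici t) t)
    (hm0 : ∀ t ∈ Set.Ico 0 T, 0 ≤ m t)
    (hmmono : MonotoneOn m (Set.Ico 0 T))
    (hmrc : ∀ t ∈ Set.Ico 0 T, ContinuousWithinAt m (Set.Ici t) t)
    (hcβ : ∀ β, 0 ≤ cβ β) (hc : 0 ≤ c)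
    (νβ : ℝ → Measure ℝ) (ν : Measure ℝ)
    (hνβ : ∀ β, νβ β =
      (volume.restrict (Set.Ico 0 T)).withDensity (fun t => ENNReal.ofReal (mβ β t)) +
        ENNReal.ofReal (cβ β) • Measure.dirac T)
    (hν : ν =
      (volume.restrict (Set.Ico 0 T)).withDensity (fun t => ENNReal.ofReal (m t)) +
        ENNReal.ofReal c • Measure.dirac T)
    (hfinβ : ∀ β, IsFiniteMeasure (νβ β)) (hfin : IsFiniteMeasure ν)
    (hconv : ∀ f : ℝ → ℝ, ContinuousOn f (Set.Icc 0 T) →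
      Tendsto (fun β => ∫ t in Set.Icc 0 T, f t ∂(νβ β)) atTop
        (nhds (∫ t in Set.Icc 0 T, f t ∂ν)))
    (ψ : ℝ → ℝ) (hψmeas : Measurable ψ)
    (hψbdd : ∃ C, ∀ t ∈ Set.Icc 0 T, |ψ t| ≤ C)
    (hψlim : Tendsto ψ (nhdsWithin T (Set.Iio T)) (nhds (ψ T))) :
    Tendsto (fun β => ∫ t in Set.Icc 0 T, ψ t ∂(νβ β)) atTop
      (nhds (∫ t in Set.Icc 0 T, ψ t ∂ν)) := by
  obtain ⟨C, hC⟩ := hψbdd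
  haveI := hfin
  set M₀ : ℝ := (ν (Set.Icc 0 T)).toReal with hM₀
  set M : ℝ := M₀ + 1 with hMdef
  have hM₀0 : 0 ≤ M₀ := ENNReal.toReal_nonneg
  have hM : 0 < M := by linarith
  have hmassconv : Tendsto (fun β => ((νβ β) (Set.Icc 0 T)).toReal) atTop (nhds M₀) := by
    have := hconv (fun _ => 1) continuousOn_const
    simp [setIntegral_const] at this
    exact this
  have hev : ∀ᶠ β in atTop, (νβ β) (Set.Icc 0 T) ≤ ENNReal.ofReal M := by
    filter_upwards [hmassconv.eventually (eventually_le_nhds (lt_add_one M₀))] with β hβ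
    haveI := hfinβ β
    exact (ENNReal.le_ofReal_iff_toReal_le (measure_ne_top _ _) hM.le).2 hβ
  have hmassν : ν (Set.Icc 0 T) ≤ ENNReal.ofReal M :=
    (ENNReal.le_ofReal_iff_toReal_le (measure_ne_top _ _) hM.le).2 (by rw [← hM₀]; linarith)
  rw [Metric.tendsto_nhds]
  intro ε hε
  set ε₁ : ℝ := ε / (8 * (M + 1)) with hε₁def
  have hε₁ : 0 < ε₁ := by positivity
  obtain ⟨δ, hδ, hδ'⟩ := Metric.tendsto_nhdsWithin_nhds.1 hψlim ε₁ hε₁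
  set η : ℝ := min δ T / 2 with hηdef
  have hminpos : 0 < min δ T := lt_min hδ hT
  have hη : 0 < η := by rw [hηdef]; linarith
  have hηT : η ≤ T := by
    have h1 : min δ T ≤ T := min_le_right _ _
    rw [hηdef]; linarith
  have hψ₁ : ∀ s ∈ Set.Ico (T - η) T, |ψ s - ψ T| ≤ ε₁ := by
    intro s hs
    have h1 : min δ T ≤ δ := min_le_left _ _
    have h2 : dist s T < δ := by
      rw [Real.dist_eq, abs_of_nonpos (by linarith [hs.2] : s - T ≤ 0)]
      have := hs.1
      rw [hηdef] at this
      linarith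
    have := hδ' hs.2 h2
    rw [Real.dist_eq] at this
    exact this.le
  set εL : ℝ := ε * η / (8 * M) with hεLdef
  have hεL : 0 < εL := by positivity
  have hTη0 : (0:ℝ) ≤ T - η := by linarith
  have hCsub : ∀ t ∈ Set.Icc 0 (T - η), |ψ t| ≤ C :=
    fun t ht => hC t ⟨ht.1, by linarith [ht.2]⟩
  obtain ⟨h, hhcont, hhT, hhL⟩ := st15_approx hTη0 hψmeas hCsub (ψ T) hεL
  have hhT' : ∀ s ∈ Set.Icc (T - η) T, h s = ψ T := fun s hs => hhT s hs.1
  have hbound : M / η * εL + ε₁ * M ≤ ε / 4 := by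
    have e1 : M / η * εL = ε / 8 := by
      rw [hεLdef]; field_simp
    have e2 : ε₁ * M ≤ ε / 8 := by
      have h8 : (0:ℝ) < 8 * (M + 1) := by positivity
      rw [hε₁def, div_mul_eq_mul_div, div_le_div_iff₀ h8 (by norm_num : (0:ℝ) < 8)]
      nlinarith
    linarith
  have Bν : |(∫ t in Set.Icc 0 T, ψ t ∂ν) - ∫ t in Set.Icc 0 T, h t ∂ν| ≤ ε / 4 :=
    le_trans (st15_key_est hT hη hηT hmmono hν hM.le hmassν hψmeas hhcont hC hε₁.le hψ₁
      hhT' hεL.le hhL) hbound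
  have Bβ : ∀ᶠ β in atTop,
      |(∫ t in Set.Icc 0 T, ψ t ∂(νβ β)) - ∫ t in Set.Icc 0 T, h t ∂(νβ β)| ≤ ε / 4 := by
    filter_upwards [hev] with β hβ
    exact le_trans (st15_key_est hT hη hηT (hmβmono β) (hνβ β) hM.le hβ hψmeas hhcont hC
      hε₁.le hψ₁ hhT' hεL.le hhL) hbound
  have hconvh := (Metric.tendsto_nhds.1 (hconv h hhcont.continuousOn)) (ε / 4) (by positivity)
  filter_upwards [Bβ, hconvh] with β h1 h2
  rw [Real.dist_eq]
  rw [Real.dist_eq] at h2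
  have tri1 := abs_sub_le (∫ t in Set.Icc 0 T, ψ t ∂(νβ β)) (∫ t in Set.Icc 0 T, h t ∂(νβ β))
    (∫ t in Set.Icc 0 T, ψ t ∂ν)
  have tri2 := abs_sub_le (∫ t in Set.Icc 0 T, h t ∂(νβ β)) (∫ t in Set.Icc 0 T, h t ∂ν)
    (∫ t in Set.Icc 0 T, ψ t ∂ν)
  have hBν' : |(∫ t in Set.Icc 0 T, h t ∂ν) - ∫ t in Set.Icc 0 T, ψ t ∂ν| ≤ ε / 4 := by
    rw [abs_sub_comm]; exact Bν
  linarith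
end

section
/- Let T > 0, let m : [0,T) → [0,∞) be nondecreasing and right-continuous with ∫_0^T m(t) dt < ∞, and let c ≥ 0. For β > 0 set c_β = c if c > 0 and c_β = 1/β if c = 0. Then for all β sufficiently large there exists q_β ∈ (0,T) such that ∫_{q_β}^T m(t) dt + c_β = β(T − q_β) and m(q_β) ≤ β; moreover, any such choice of q_β satisfies q_β → T as β → ∞. -/
open MeasureTheory Filter

/-- Let `T > 0`, `m : [0,T) → [0,∞)` nondecreasing and right-continuous
with `∫₀ᵀ m < ∞`, and `c ≥ 0`.  With `c_β = c` if `c > 0` and `c_β = 1/β` otherwise, for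
all sufficiently large `β` there exists `q_β ∈ (0,T)` with
`∫_{q_β}^T m(t) dt + c_β = β(T − q_β)` and `m(q_β) ≤ β`; moreover any such choice of `q_β`
satisfies `q_β → T` as `β → ∞`. -/
theorem statement16 (T : ℝ) (hT : 0 < T) (m : ℝ → ℝ)
    (hm0 : ∀ t ∈ Set.Ico 0 T, 0 ≤ m t)
    (hmmono : MonotoneOn m (Set.Ico 0 T))
    (hmrc : ∀ t ∈ Set.Ico 0 T, ContinuousWithinAt m (Set.Ici t) t)
    (hmint : IntegrableOn m (Set.Ico 0 T))
    (c : ℝ) (hc : 0 ≤ c) :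
    (∃ β₀ : ℝ, ∀ β ≥ β₀, ∃ q ∈ Set.Ioo 0 T,
        (∫ t in Set.Ico q T, m t) + (if 0 < c then c else 1 / β) = β * (T - q) ∧
        m q ≤ β) ∧
    (∀ qf : ℝ → ℝ,
      (∀ᶠ β in atTop, qf β ∈ Set.Ioo 0 T ∧
        (∫ t in Set.Ico (qf β) T, m t) + (if 0 < c then c else 1 / β) = β * (T - qf β) ∧
        m (qf β) ≤ β) →
      Tendsto qf atTop (nhds T)) := by
  set C := ∫ t in Set.Ico 0 T, m t with hCdef
  -- integrability on subintervals
  have hint2 : ∀ q : ℝ, 0 ≤ q → IntegrableOn m (Set.Ico q T) := fun q hq =>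
    hmint.mono_set (fun x hx => ⟨le_trans hq hx.1, hx.2⟩)
  have hmnonnegae : 0 ≤ᶠ[ae (volume.restrict (Set.Ico 0 T))] m :=
    (ae_restrict_iff' measurableSet_Ico).mpr (ae_of_all _ hm0)
  have hgle : ∀ q : ℝ, 0 ≤ q → (∫ t in Set.Ico q T, m t) ≤ C := by
    intro q hq
    exact setIntegral_mono_set hmint hmnonnegae
      (HasSubset.Subset.eventuallyLE (fun x hx => ⟨le_trans hq hx.1, hx.2⟩))
  have hCnonneg : 0 ≤ C := setIntegral_nonneg measurableSet_Ico hm0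
  -- continuity of q ↦ ∫_{[q,T)} m on [0,T]
  have hsplit : ∀ q ∈ Set.Icc (0:ℝ) T,
      (∫ t in Set.Ico q T, m t) = C - ∫ t in Set.Ioc 0 q, m t := by
    intro q hq
    have h1 : Set.Ico (0:ℝ) q ∪ Set.Ico q T = Set.Ico 0 T :=
      Set.Ico_union_Ico_eq_Ico hq.1 hq.2
    have hdisj : Disjoint (Set.Ico (0:ℝ) q) (Set.Ico q T) :=
      Set.disjoint_left.mpr fun x hx hx' => absurd (lt_of_le_of_lt hx'.1 hx.2) (lt_irrefl q)
    have hi1 : IntegrableOn m (Set.Ico 0 q) :=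
      hmint.mono_set (fun x hx => ⟨hx.1, lt_of_lt_of_le hx.2 hq.2⟩)
    have hi2 : IntegrableOn m (Set.Ico q T) := hint2 q hq.1
    have hu := setIntegral_union hdisj measurableSet_Ico hi1 hi2 (f := m) (μ := volume)
    rw [h1] at hu
    have hIoc : (∫ t in Set.Ioc 0 q, m t) = ∫ t in Set.Ico 0 q, m t := by
      rw [integral_Ioc_eq_integral_Ioo, integral_Ico_eq_integral_Ioo]
    rw [hIoc]; linarith
  have hcont : ContinuousOn (fun q => ∫ t in Set.Ico q T, m t) (Set.Icc 0 T) := by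
    have hIcc : IntegrableOn m (Set.Icc 0 T) := by
      rwa [integrableOn_Icc_iff_integrableOn_Ico]
    have h := intervalIntegral.continuousOn_primitive (μ := volume) (f := m)
      (a := 0) (b := T) hIcc
    exact (continuousOn_const.sub h).congr hsplit
  constructor
  · refine ⟨max 2 ((C + c + 1) / T), fun β hβ => ?_⟩
    have hβ2 : (2:ℝ) ≤ β := le_trans (le_max_left _ _) hβ
    have hβpos : (0:ℝ) < β := by linarith
    have hβT : C + c + 1 ≤ β * T := by
      have h := le_trans (le_max_right _ _) hβ
      calc C + c + 1 = ((C + c + 1) / T) * T := by field_simp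
        _ ≤ β * T := mul_le_mul_of_nonneg_right h hT.le
    set cβ := if 0 < c then c else 1 / β with hcβdef
    have hcβpos : 0 < cβ := by
      by_cases h : 0 < c
      · simp [hcβdef, h]
      · simp only [hcβdef, if_neg h]; positivity
    have hcβlt : cβ < c + 1 := by
      by_cases h : 0 < c
      · simp [hcβdef, h]
      · simp only [hcβdef, if_neg h]
        have : 1 / β ≤ 1 / 2 := by
          apply one_div_le_one_div_of_le <;> linarith
        linarith
    -- IVT for f q = ∫_{[q,T)} m + β * q, target β*T - cβ
    have hf : ContinuousOn (fun q => (∫ t in Set.Ico q T, m t) + β * q) (Set.Icc 0 T) :=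
      hcont.add ((continuous_const.mul continuous_id).continuousOn)
    have hmem : β * T - cβ ∈ Set.Ioo
        ((∫ t in Set.Ico (0:ℝ) T, m t) + β * 0) ((∫ t in Set.Ico T T, m t) + β * T) := by
      constructor
      · simp only [mul_zero, add_zero]
        have : C + cβ < β * T := by linarith
        linarith [this]
      · rw [Set.Ico_self, Measure.restrict_empty, integral_zero_measure]
        linarith
    obtain ⟨q, hq, hfq⟩ := intermediate_value_Ioo hT.le hf hmem
    have hqIco : q ∈ Set.Ico 0 T := ⟨hq.1.le, hq.2⟩
    have heq : (∫ t in Set.Ico q T, m t) + cβ = β * (T - q) := by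
      simp only at hfq; ring_nf; ring_nf at hfq; linarith
    refine ⟨q, hq, heq, ?_⟩
    -- m q ≤ β
    have hlb : m q * (T - q) ≤ ∫ t in Set.Ico q T, m t := by
      have hμ : volume (Set.Ico q T) ≠ ⊤ := by simp [Real.volume_Ico]
      have h := setIntegral_ge_of_const_le measurableSet_Ico hμ
        (fun t ht => hmmono hqIco ⟨le_trans hq.1.le ht.1, ht.2⟩ ht.1) (hint2 q hq.1.le)
      rwa [measureReal_def, Real.volume_Ico, ENNReal.toReal_ofReal (by linarith [hq.2] : (0:ℝ) ≤ T - q), smul_eq_mul, mul_comm] at h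
    have hmul : m q * (T - q) ≤ β * (T - q) := by linarith
    exact le_of_mul_le_mul_right hmul (by linarith [hq.2])
  · intro qf hqf
    have key : ∀ᶠ β in atTop, T - (C + c + 1) / β ≤ qf β ∧ qf β ≤ T := by
      filter_upwards [hqf, eventually_ge_atTop (2:ℝ)] with β hβ hβ2
      obtain ⟨hqmem, heq, _⟩ := hβ
      have hβpos : (0:ℝ) < β := by linarith
      have hcβle : (if 0 < c then c else 1 / β) ≤ c + 1 := by
        by_cases h : 0 < c
        · simp [h]
        · simp only [if_neg h]
          have : 1 / β ≤ 1 / 2 := by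
            apply one_div_le_one_div_of_le <;> linarith
          linarith
      have hg : (∫ t in Set.Ico (qf β) T, m t) ≤ C := hgle _ hqmem.1.le
      have h1 : β * (T - qf β) ≤ C + c + 1 := by linarith
      constructor
      · have : T - qf β ≤ (C + c + 1) / β := by
          rw [le_div_iff₀ hβpos]; nlinarith
        linarith
      · exact hqmem.2.le
    have h1 : Tendsto (fun β : ℝ => T - (C + c + 1) / β) atTop (nhds T) := by
      have h2 : Tendsto (fun β : ℝ => (C + c + 1) / β) atTop (nhds 0) :=
        Tendsto.div_atTop tendsto_const_nhds tendsto_id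
      simpa using tendsto_const_nhds.sub h2
    exact tendsto_of_tendsto_of_tendsto_of_le_of_le' h1 tendsto_const_nhds
      (key.mono fun β h => h.1) (key.mono fun β h => h.2)
end
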